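/- Let E be a real inner product space, let T > 0, κ ≥ 0, Δ ≥ 0, and let γ : ℝ → E be a twice continuously differentiable curve such that for all t ∈ [0, T] one has ‖γ(t)‖ = 1, ‖γ'(t)‖ = 1, and ‖γ''(t)‖ ≤ κ. Let s♮, z ∈ E satisfy ‖s♮ - γ(0)‖ ≤ Δ. Then for every t ∈ [0, T], -⟨γ''(t), s♮ + z⟩ ≤ 1 + κ²t²/2 + κΔ + κ‖z‖. -/

import Mathlib

open RealInnerProductSpace

theorem stmt_3 {E : Type*} [NormedAddCommGroup E] [InnerProductSpace ℝ E]
    (T κ Δ : ℝ) (hT : 0 < T) (hκ : 0 ≤ κ) (hΔ : 0 ≤ Δ) (γ : ℝ → E)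
    (hγ : ContDiff ℝ 2 γ)
    (hsphere : ∀ t ∈ Set.Icc (0 : ℝ) T, ‖γ t‖ = 1)
    (hspeed : ∀ t ∈ Set.Icc (0 : ℝ) T, ‖deriv γ t‖ = 1)
    (hcurv : ∀ t ∈ Set.Icc (0 : ℝ) T, ‖deriv (deriv γ) t‖ ≤ κ)
    (s z : E) (hs : ‖s - γ 0‖ ≤ Δ) :
    ∀ t ∈ Set.Icc (0 : ℝ) T,
      -⟪deriv (deriv γ) t, s + z⟫ ≤ 1 + κ ^ 2 * t ^ 2 / 2 + κ * Δ + κ * ‖z‖ := by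
  intro t ht
  have hγ2 : ContDiff ℝ (1 + 1) γ := by norm_num; exact hγ
  have hd1 : Differentiable ℝ γ := hγ.differentiable two_ne_zero
  have hγ' : ContDiff ℝ 1 (deriv γ) := (contDiff_succ_iff_deriv.mp hγ2).2.2
  have hd2 : Differentiable ℝ (deriv γ) := hγ'.differentiable one_ne_zero
  have hD1 : ∀ u : ℝ, HasDerivAt γ (deriv γ u) u := fun u => (hd1 u).hasDerivAt
  have hD2 : ∀ u : ℝ, HasDerivAt (deriv γ) (deriv (deriv γ) u) u :=
    fun u => (hd2 u).hasDerivAt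
  have hud : UniqueDiffOn ℝ (Set.Icc (0 : ℝ) T) := uniqueDiffOn_Icc hT
  -- generic fact: a function with derivative f' that is constant on [0,T] has f' = 0 there
  have key : ∀ (f f' : ℝ → ℝ) (c : ℝ), (∀ u, HasDerivAt f (f' u) u) →
      (∀ u ∈ Set.Icc (0 : ℝ) T, f u = c) → ∀ u ∈ Set.Icc (0 : ℝ) T, f' u = 0 := by
    intro f f' c hf hc u hu
    have h1 : HasDerivWithinAt f (f' u) (Set.Icc (0 : ℝ) T) u := (hf u).hasDerivWithinAt
    have h2 : HasDerivWithinAt f 0 (Set.Icc (0 : ℝ) T) u :=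
      (hasDerivWithinAt_const u _ c).congr hc (hc u hu)
    have := h1.derivWithin (hud u hu)
    rw [← this, h2.derivWithin (hud u hu)]
  -- ⟪γ', γ⟫ = 0 on [0,T]
  have horth1 : ∀ u ∈ Set.Icc (0 : ℝ) T, ⟪deriv γ u, γ u⟫ = 0 := by
    have h0 := key (fun u => ⟪γ u, γ u⟫) (fun u => ⟪γ u, deriv γ u⟫ + ⟪deriv γ u, γ u⟫) 1
      (fun u => (hD1 u).inner ℝ (hD1 u))
      (fun u hu => by show ⟪γ u, γ u⟫ = (1:ℝ); rw [real_inner_self_eq_norm_sq, hsphere u hu]; norm_num)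
    intro u hu
    have h1 : ⟪γ u, deriv γ u⟫ + ⟪deriv γ u, γ u⟫ = 0 := h0 u hu
    rw [real_inner_comm] at h1
    linarith
  -- ⟪γ'', γ⟫ = -1 on [0,T]
  have hgg : ∀ u ∈ Set.Icc (0 : ℝ) T, ⟪deriv (deriv γ) u, γ u⟫ = -1 := by
    have h0 := key (fun u => ⟪deriv γ u, γ u⟫)
      (fun u => ⟪deriv γ u, deriv γ u⟫ + ⟪deriv (deriv γ) u, γ u⟫) 0
      (fun u => (hD2 u).inner ℝ (hD1 u)) horth1
    intro u hu
    have h1 : ⟪deriv γ u, deriv γ u⟫ + ⟪deriv (deriv γ) u, γ u⟫ = 0 := h0 u hu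
    have h2 : ⟪deriv γ u, deriv γ u⟫ = 1 := by
      rw [real_inner_self_eq_norm_sq, hspeed u hu]; norm_num
    linarith
  -- ⟪γ'', γ'⟫ = 0 on [0,T]
  have horth2 : ∀ u ∈ Set.Icc (0 : ℝ) T, ⟪deriv (deriv γ) u, deriv γ u⟫ = 0 := by
    have h0 := key (fun u => ⟪deriv γ u, deriv γ u⟫)
      (fun u => ⟪deriv γ u, deriv (deriv γ) u⟫ + ⟪deriv (deriv γ) u, deriv γ u⟫) 1
      (fun u => (hD2 u).inner ℝ (hD2 u))
      (fun u hu => by show ⟪deriv γ u, deriv γ u⟫ = (1:ℝ); rw [real_inner_self_eq_norm_sq, hspeed u hu]; norm_num)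
    intro u hu
    have h1 : ⟪deriv γ u, deriv (deriv γ) u⟫ + ⟪deriv (deriv γ) u, deriv γ u⟫ = 0 := h0 u hu
    rw [real_inner_comm] at h1
    linarith
  obtain ⟨ht0, htT⟩ := ht
  have hκt : ‖deriv (deriv γ) t‖ ≤ κ := hcurv t ⟨ht0, htT⟩
  -- Lipschitz bound on γ' over [0,T]
  have hlip : ∀ u ∈ Set.Icc (0 : ℝ) T, ‖deriv γ u - deriv γ t‖ ≤ κ * ‖u - t‖ := fun u hu =>
    (convex_Icc 0 T).norm_image_sub_le_of_norm_deriv_le (fun x _ => hd2 x) hcurv ⟨ht0, htT⟩ hu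
  -- pointwise bound on the integrand
  have hptw : ∀ u ∈ Set.Icc (0 : ℝ) t, |⟪deriv (deriv γ) t, deriv γ u⟫| ≤ κ ^ 2 * (t - u) := by
    intro u hu
    have huT : u ∈ Set.Icc (0 : ℝ) T := ⟨hu.1, hu.2.trans htT⟩
    have h1 : ⟪deriv (deriv γ) t, deriv γ u⟫ =
        ⟪deriv (deriv γ) t, deriv γ u - deriv γ t⟫ := by
      rw [inner_sub_right, horth2 t ⟨ht0, htT⟩]; ring
    rw [h1]
    calc |⟪deriv (deriv γ) t, deriv γ u - deriv γ t⟫|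
        ≤ ‖deriv (deriv γ) t‖ * ‖deriv γ u - deriv γ t‖ := abs_real_inner_le_norm _ _
      _ ≤ κ * (κ * ‖u - t‖) := by
          apply mul_le_mul hκt (hlip u huT) (norm_nonneg _) hκ
      _ = κ ^ 2 * (t - u) := by
          rw [Real.norm_eq_abs, abs_of_nonpos (by linarith [hu.2])]; ring
  -- FTC : ⟪γ''(t), γ t - γ 0⟫ = ∫₀ᵗ ⟪γ''(t), γ' u⟫ du
  have hcont : Continuous fun u => ⟪deriv (deriv γ) t, deriv γ u⟫ :=
    (continuous_const.inner (hγ'.continuous))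
  have hftc : ⟪deriv (deriv γ) t, γ t⟫ - ⟪deriv (deriv γ) t, γ 0⟫ =
      ∫ u in (0:ℝ)..t, ⟪deriv (deriv γ) t, deriv γ u⟫ := by
    rw [← intervalIntegral.integral_eq_sub_of_hasDerivAt
      (f := fun u => ⟪deriv (deriv γ) t, γ u⟫)
      (fun u _ => by
        simpa using (hasDerivAt_const u (deriv (deriv γ) t)).inner ℝ (hD1 u))
      (hcont.intervalIntegrable 0 t)]
  -- bound the integral
  have hbound : |⟪deriv (deriv γ) t, γ t⟫ - ⟪deriv (deriv γ) t, γ 0⟫| ≤ κ ^ 2 * t ^ 2 / 2 := by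
    rw [hftc]
    have hib : IntervalIntegrable (fun u => κ ^ 2 * (t - u)) MeasureTheory.volume 0 t :=
      ((continuous_const.mul (continuous_const.sub continuous_id)).intervalIntegrable 0 t)
    have h1 : |∫ u in (0:ℝ)..t, ⟪deriv (deriv γ) t, deriv γ u⟫| ≤
        |∫ u in (0:ℝ)..t, κ ^ 2 * (t - u)| := by
      rw [← Real.norm_eq_abs]
      refine (intervalIntegral.norm_integral_le_of_norm_le ht0 ?_ hib).trans (le_abs_self _)
      filter_upwards with u hu
      exact (Real.norm_eq_abs _) ▸ hptw u ⟨le_of_lt hu.1, hu.2⟩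
    have h2 : (∫ u in (0:ℝ)..t, κ ^ 2 * (t - u)) = κ ^ 2 * t ^ 2 / 2 := by
      rw [intervalIntegral.integral_const_mul]
      have : (∫ u in (0:ℝ)..t, (t - u)) = t ^ 2 / 2 := by
        rw [intervalIntegral.integral_sub intervalIntegrable_const intervalIntegral.intervalIntegrable_id]
        simp [integral_id]
        ring
      rw [this]; ring
    rw [h2] at h1
    calc |∫ u in (0:ℝ)..t, ⟪deriv (deriv γ) t, deriv γ u⟫| ≤ |κ ^ 2 * t ^ 2 / 2| := h1
      _ = κ ^ 2 * t ^ 2 / 2 := abs_of_nonneg (by positivity)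
  -- combine everything
  have hsplit : (s + z : E) = γ t + (γ 0 - γ t) + (s - γ 0) + z := by abel
  rw [hsplit]
  simp only [inner_add_right, inner_sub_right]
  have e1 : ⟪deriv (deriv γ) t, γ t⟫ = -1 := hgg t ⟨ht0, htT⟩
  have e2 : |⟪deriv (deriv γ) t, γ 0⟫ - ⟪deriv (deriv γ) t, γ t⟫| ≤ κ ^ 2 * t ^ 2 / 2 := by
    rw [abs_sub_comm]; exact hbound
  have e3 : |⟪deriv (deriv γ) t, s⟫ - ⟪deriv (deriv γ) t, γ 0⟫| ≤ κ * Δ := by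
    rw [← inner_sub_right]
    calc |⟪deriv (deriv γ) t, s - γ 0⟫| ≤ ‖deriv (deriv γ) t‖ * ‖s - γ 0‖ :=
        abs_real_inner_le_norm _ _
      _ ≤ κ * Δ := mul_le_mul hκt hs (norm_nonneg _) hκ
  have e4 : |⟪deriv (deriv γ) t, z⟫| ≤ κ * ‖z‖ :=
    (abs_real_inner_le_norm _ _).trans (mul_le_mul_of_nonneg_right hκt (norm_nonneg _))
  have a2 := abs_le.mp e2
  have a3 := abs_le.mp e3
  have a4 := abs_le.mp e4
  rw [e1]
  linarith [a2.1, a2.2, a3.1, a3.2, a4.1, a4.2]
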